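/- Let h : 𝕋 → ℝ be continuous with ∫₀^{2π} h(e^{iθ}) dθ = 0. Then for every ε > 0 there exist n ∈ ℕ and points z₁,…,z_n ∈ 𝔻 such that |h(ζ) − ∑_{k=1}^{n} P(z_k, ζ) + n| < ε for all ζ ∈ 𝕋. -/

import Mathlib

open Complex MeasureTheory intervalIntegral

/-- The Poisson kernel of the unit disk. -/
noncomputable def poissonK (z ζ : ℂ) : ℝ := (1 - ‖z‖ ^ 2) / ‖ζ - z‖ ^ 2

open Finset

lemma poissonK_eq (z ζ : ℂ) (hζ : ‖ζ‖ = 1) (hz : ‖z‖ < 1) :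
    poissonK z ζ = 1 + 2 * ((z * (starRingEnd ℂ) ζ) / (1 - z * (starRingEnd ℂ) ζ)).re := by
  set w := z * (starRingEnd ℂ) ζ with hw
  have hwn : ‖w‖ = ‖z‖ := by
    simp [hw, norm_mul, hζ]
  have hwlt : ‖w‖ < 1 := by rw [hwn]; exact hz
  have h1 : (1 : ℂ) - w ≠ 0 := by
    intro h
    have : (1:ℂ) = w := by linear_combination h
    rw [← this] at hwlt; simp at hwlt
  have hζz : ζ - z = ζ * (1 - w) := by
    have hmc : ζ * (starRingEnd ℂ) ζ = 1 := by
      rw [Complex.mul_conj]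
      norm_cast
      rw [Complex.normSq_eq_norm_sq]
      simp [hζ]
    calc ζ - z = ζ - z * (ζ * (starRingEnd ℂ) ζ) := by rw [hmc]; ring
    _ = ζ * (1 - w) := by rw [hw]; ring
  have hns : Complex.normSq (1 - w) ≠ 0 := by
    simpa using Complex.normSq_pos.mpr h1 |>.ne'
  have key : ‖ζ - z‖ = ‖1 - w‖ := by rw [hζz, norm_mul, hζ, one_mul]
  unfold poissonK
  rw [key, ← hwn]
  rw [Complex.div_re]
  have e1 : ‖w‖^2 = Complex.normSq w := by
    simp [Complex.normSq_eq_norm_sq]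
  have e2 : ‖(1:ℂ)-w‖^2 = Complex.normSq (1-w) := by
    simp [Complex.normSq_eq_norm_sq]
  rw [e1, e2]
  have hexp : Complex.normSq (1-w) = 1 - 2*w.re + Complex.normSq w := by
    simp [Complex.normSq_apply, Complex.sub_re, Complex.sub_im]
    ring
  field_simp
  rw [hexp]
  simp [Complex.normSq_apply, Complex.sub_re, Complex.sub_im]
  ring

lemma re_div_error (a : ℂ) (ha : ‖a‖ < 1) :
    |(a/(1-a)).re - a.re| ≤ ‖a‖^2/(1-‖a‖) := by
  have h1 : (1 : ℂ) - a ≠ 0 := by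
    intro h
    have : (1:ℂ) = a := by linear_combination h
    rw [← this] at ha; simp at ha
  have key : a/(1-a) - a = a^2/(1-a) := by field_simp; ring
  calc |(a/(1-a)).re - a.re| = |(a/(1-a) - a).re| := by rw [Complex.sub_re]
  _ = |(a^2/(1-a)).re| := by rw [key]
  _ ≤ ‖a^2/(1-a)‖ := Complex.abs_re_le_norm _
  _ = ‖a‖^2/‖1-a‖ := by rw [norm_div, norm_pow]
  _ ≤ ‖a‖^2/(1-‖a‖) := by
      apply div_le_div_of_nonneg_left (by positivity) (by linarith)
      calc 1 - ‖a‖ = ‖(1:ℂ)‖ - ‖a‖ := by simp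
      _ ≤ ‖1 - a‖ := norm_sub_norm_le _ _

lemma one_sub_ne_zero_of_norm_lt (a : ℂ) (ha : ‖a‖ < 1) : (1:ℂ) - a ≠ 0 := by
  intro h
  have : (1:ℂ) = a := by linear_combination h
  rw [← this] at ha; simp at ha

lemma rootsum_id (m : ℕ) (hm : 0 < m) (u : ℂ) (hu : ‖u‖ < 1) :
    ∑ j ∈ Finset.range m, (Complex.exp (2*Real.pi*I/m))^j * u /
        (1 - (Complex.exp (2*Real.pi*I/m))^j * u)
      = m * u^m / (1 - u^m) := by
  set ω : ℂ := Complex.exp (2*Real.pi*I/m) with hω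
  have hprim : IsPrimitiveRoot ω m := Complex.isPrimitiveRoot_exp m hm.ne' 
  have hω1 : ω ^ m = 1 := hprim.pow_eq_one
  have hωn : ‖ω‖ = 1 := Complex.norm_eq_one_of_pow_eq_one hω1 hm.ne'
  have hxn : ∀ j : ℕ, ‖ω^j * u‖ = ‖u‖ := by
    intro j; rw [norm_mul, norm_pow, hωn, one_pow, one_mul]
  have hd : ∀ j : ℕ, (1:ℂ) - ω^j * u ≠ 0 := fun j =>
    one_sub_ne_zero_of_norm_lt _ (by rw [hxn]; exact hu)
  have hum : ‖u^m‖ < 1 := by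
    rw [norm_pow]
    calc ‖u‖^m ≤ ‖u‖^1 := pow_le_pow_of_le_one (norm_nonneg u) hu.le hm
    _ < 1 := by simpa using hu
  have hD : (1:ℂ) - u^m ≠ 0 := one_sub_ne_zero_of_norm_lt _ hum
  have hxm : ∀ j : ℕ, (ω^j * u)^m = u^m := by
    intro j
    rw [mul_pow, ← pow_mul, mul_comm j m, pow_mul, hω1, one_pow, one_mul]
  -- step 1 : each term equals x_j * (geometric sum) / (1 - u^m)
  have step1 : ∀ j ∈ Finset.range m, ω^j * u / (1 - ω^j * u)
      = (ω^j * u) * (∑ i ∈ Finset.range m, (ω^j * u)^i) / (1 - u^m) := by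
    intro j _
    set x := ω^j * u with hx
    have hgeom : (1 - x) * (∑ i ∈ Finset.range m, x^i) = 1 - u^m := by
      have := geom_sum_mul x m
      rw [← hxm j, ← hx]
      linear_combination -this
    rw [div_eq_div_iff (hd j) hD]
    calc x * (1 - u^m) = x * ((1-x) * (∑ i ∈ Finset.range m, x^i)) := by rw [hgeom]
    _ = x * (∑ i ∈ Finset.range m, x^i) * (1 - x) := by ring
  rw [Finset.sum_congr rfl step1, ← Finset.sum_div]
  congr 1
  -- numerator
  have swap : ∑ j ∈ Finset.range m, (ω^j * u) * (∑ i ∈ Finset.range m, (ω^j*u)^i)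
      = ∑ i ∈ Finset.range m, (∑ j ∈ Finset.range m, (ω^(i+1))^j) * u^(i+1) := by
    have e : ∀ j ∈ Finset.range m, (ω^j * u) * (∑ i ∈ Finset.range m, (ω^j*u)^i)
        = ∑ i ∈ Finset.range m, (ω^(i+1))^j * u^(i+1) := by
      intro j _
      rw [Finset.mul_sum]
      apply Finset.sum_congr rfl; intro i _
      calc (ω^j * u) * (ω^j*u)^i = (ω^j*u)^(i+1) := by ring
      _ = (ω^(i+1))^j * u^(i+1) := by
          rw [mul_pow, ← pow_mul, ← pow_mul, mul_comm j (i+1)]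
    rw [Finset.sum_congr rfl e, Finset.sum_comm]
    apply Finset.sum_congr rfl; intro i _
    rw [Finset.sum_mul]
  rw [swap]
  -- evaluate: only i = m-1 survives
  rw [Finset.sum_eq_single (m-1)]
  · have hm1 : m - 1 + 1 = m := Nat.succ_pred_eq_of_pos hm
    rw [hm1]
    have : ∀ j ∈ Finset.range m, (ω^m)^j = 1 := by
      intro j _; rw [hω1, one_pow]
    rw [Finset.sum_congr rfl this, Finset.sum_const, Finset.card_range]
    simp
  · intro i hi hne
    have hi' : i + 1 < m := by
      rcases Nat.lt_iff_le_and_ne.mp (Finset.mem_range.mp hi) with ⟨h1, h2⟩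
      rcases Nat.lt_or_ge (i+1) m with h | h
      · exact h
      · exfalso; apply hne; omega
    have hx1 : ω^(i+1) ≠ 1 := hprim.pow_ne_one_of_pos_of_lt (Nat.succ_ne_zero i) hi'
    have hxm' : (ω^(i+1))^m = 1 := by
      rw [← pow_mul, mul_comm (i+1) m, pow_mul, hω1, one_pow]
    rw [geom_sum_eq hx1, hxm', sub_self, zero_div, zero_mul]
  · intro h
    exact absurd (Finset.mem_range.mpr (by omega)) h

def PoissonRep (f : ℂ → ℝ) (δ : ℝ) : Prop :=
  ∃ (n : ℕ) (z : Fin n → ℂ), (∀ k, ‖z k‖ < 1) ∧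
    ∀ ζ : ℂ, ‖ζ‖ = 1 → |f ζ - (∑ k, poissonK (z k) ζ - n)| ≤ δ

lemma PoissonRep.congr {f g : ℂ → ℝ} {δ : ℝ} (hf : PoissonRep f δ)
    (hfg : ∀ ζ, ‖ζ‖ = 1 → f ζ = g ζ) : PoissonRep g δ := by
  obtain ⟨n, z, hz, hb⟩ := hf
  exact ⟨n, z, hz, fun ζ hζ => by rw [← hfg ζ hζ]; exact hb ζ hζ⟩

lemma PoissonRep.zero : PoissonRep (fun _ => 0) 0 := by
  refine ⟨0, ![], fun k => k.elim0, fun ζ hζ => by simp⟩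

lemma PoissonRep.add {f g : ℂ → ℝ} {δ δ' : ℝ} (hf : PoissonRep f δ) (hg : PoissonRep g δ') :
    PoissonRep (fun ζ => f ζ + g ζ) (δ + δ') := by
  obtain ⟨n, z, hz, hb⟩ := hf
  obtain ⟨n', z', hz', hb'⟩ := hg
  refine ⟨n + n', Fin.append z z', ?_, ?_⟩
  · intro k
    refine Fin.addCases (fun i => ?_) (fun i => ?_) k
    · rw [Fin.append_left]; exact hz i
    · rw [Fin.append_right]; exact hz' i
  · intro ζ hζ
    have hsum : ∑ k : Fin (n + n'), poissonK (Fin.append z z' k) ζ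
        = ∑ k : Fin n, poissonK (z k) ζ + ∑ k : Fin n', poissonK (z' k) ζ := by
      rw [Fin.sum_univ_add]
      congr 1 <;> apply Finset.sum_congr rfl <;> intro i _
      · rw [Fin.append_left]
      · rw [Fin.append_right]
    rw [hsum]
    push_cast
    have := hb ζ hζ
    have := hb' ζ hζ
    calc |f ζ + g ζ - (∑ k : Fin n, poissonK (z k) ζ + ∑ k : Fin n', poissonK (z' k) ζ - ((n:ℝ) + n'))|
        = |(f ζ - (∑ k : Fin n, poissonK (z k) ζ - n)) + (g ζ - (∑ k : Fin n', poissonK (z' k) ζ - n'))| := by ring_nf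
      _ ≤ _ := abs_add_le _ _
      _ ≤ δ + δ' := by gcongr

lemma PoissonRep.finsetSum {ι : Type*} (M : Finset ι) (F : ι → ℂ → ℝ) (δ : ι → ℝ)
    (H : ∀ m ∈ M, PoissonRep (F m) (δ m)) :
    PoissonRep (fun ζ => ∑ m ∈ M, F m ζ) (∑ m ∈ M, δ m) := by
  classical
  induction M using Finset.induction_on with
  | empty => exact PoissonRep.zero.congr (by simp)
  | insert _ _ hni ih =>
    rename_i a s
    rw [Finset.sum_insert hni]
    exact ((H a (Finset.mem_insert_self a s)).add
      (ih fun m hm => H m (Finset.mem_insert_of_mem hm))).congr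
      (fun ζ _ => by rw [Finset.sum_insert hni])

lemma PoissonRep.mono {f : ℂ → ℝ} {δ δ' : ℝ} (hf : PoissonRep f δ) (h : δ ≤ δ') :
    PoissonRep f δ' := by
  obtain ⟨n, z, hz, hb⟩ := hf
  exact ⟨n, z, hz, fun ζ hζ => (hb ζ hζ).trans h⟩

set_option maxHeartbeats 1000000 in
lemma PoissonRep.harmonic (m : ℕ) (hm : 0 < m) (c : ℂ) (δ : ℝ) (hδ : 0 < δ) :
    PoissonRep (fun ζ => (c * ζ^m).re) δ := by
  by_cases hc : c = 0
  · exact (PoissonRep.zero.mono hδ.le).congr (fun ζ _ => by simp [hc])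
  have hcn : 0 < ‖c‖ := norm_pos_iff.mpr hc
  obtain ⟨N, hN⟩ := exists_nat_gt (‖c‖ + ‖c‖^2/δ)
  have hN0 : 0 < (N:ℝ) := lt_of_le_of_lt (by positivity) hN
  have hNn : 0 < N := by exact_mod_cast hN0
  set t : ℝ := ‖c‖ / (2*m*N) with ht
  have hmN : (0:ℝ) < 2*m*N := by positivity
  have ht0 : 0 < t := by positivity
  have htle : t ≤ ‖c‖/(2*N) := by
    rw [ht]
    apply div_le_div_of_nonneg_left (norm_nonneg c) (by positivity)
    have : (1:ℝ) ≤ m := by exact_mod_cast hm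
    nlinarith
  have hcN : ‖c‖ < N := lt_of_le_of_lt (le_add_of_nonneg_right (by positivity)) hN
  have tlehalf : t ≤ 1/2 := by
    have : ‖c‖/(2*N) < 1/2 := by
      rw [div_lt_div_iff₀ (by positivity) (by norm_num)]
      nlinarith
    linarith
  have htδ : 2*‖c‖*t ≤ δ := by
    have h2 : ‖c‖^2 < N*δ := by
      have := hN
      nlinarith [div_nonneg (sq_nonneg ‖c‖) hδ.le, (div_lt_iff₀ hδ).mp (by nlinarith : ‖c‖^2/δ < N)]
    have e : 2*‖c‖*(‖c‖/(2*N)) = ‖c‖^2/N := by field_simp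
    have h3 : ‖c‖^2/N ≤ δ := by rw [div_le_iff₀ hN0]; nlinarith
    nlinarith [mul_le_mul_of_nonneg_left htle (by positivity : (0:ℝ) ≤ 2*‖c‖)]
  -- choose the m-th root s
  obtain ⟨s, hs⟩ := IsAlgClosed.exists_pow_nat_eq ((starRingEnd ℂ) c / (2*m*N)) hm
  have hsm : ‖s‖^m = t := by
    rw [← norm_pow, hs, norm_div, RCLike.norm_conj]
    congr 1
    have e : (2*(m:ℂ)*(N:ℂ)) = ((2*(m:ℝ)*(N:ℝ) : ℝ) : ℂ) := by push_cast; ring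
    rw [e, Complex.norm_real]
    exact abs_of_pos hmN
  
  have hslt : ‖s‖ < 1 := by
    by_contra hge
    push_neg at hge
    have h1 : (1:ℝ) ≤ ‖s‖^m := one_le_pow₀ hge
    rw [hsm] at h1; linarith
  set ω : ℂ := Complex.exp (2*Real.pi*I/m) with hω
  have hωn : ‖ω‖ = 1 :=
    Complex.norm_eq_one_of_pow_eq_one (Complex.isPrimitiveRoot_exp m hm.ne').pow_eq_one hm.ne'
  have hzlt : ∀ j : ℕ, ‖ω^j * s‖ < 1 := by
    intro j; rw [norm_mul, norm_pow, hωn, one_pow, one_mul]; exact hslt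
  refine ⟨N*m, fun k => ω^(((finProdFinEquiv.symm k).2 : Fin m) : ℕ) * s, fun k => hzlt _, ?_⟩
  intro ζ hζ
  set u : ℂ := s * (starRingEnd ℂ) ζ with hu
  have hun : ‖u‖ = ‖s‖ := by rw [hu, norm_mul, RCLike.norm_conj, hζ, mul_one]
  have hult : ‖u‖ < 1 := by rw [hun]; exact hslt
  set v : ℂ := u^m with hv
  have hvn : ‖v‖ = t := by rw [hv, norm_pow, hun, hsm]
  have hvlt : ‖v‖ < 1 := by rw [hvn]; linarith
  have hrep : ∀ j : ℕ, poissonK (ω^j * s) ζ = 1 + 2*((ω^j*u)/(1-ω^j*u)).re := by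
    intro j
    rw [poissonK_eq _ _ hζ (hzlt j)]
    have e : ω^j*s*(starRingEnd ℂ) ζ = ω^j*u := by rw [hu]; ring
    rw [e]
  have inner : ∑ j : Fin m, poissonK (ω^(j:ℕ)*s) ζ = (m:ℝ) + 2*(((m:ℂ)*v/(1-v)).re) := by
    calc ∑ j : Fin m, poissonK (ω^(j:ℕ)*s) ζ
        = ∑ j ∈ Finset.range m, (1 + 2*((ω^j*u)/(1-ω^j*u)).re) := by
          rw [Fin.sum_univ_eq_sum_range (fun j => poissonK (ω^j*s) ζ)]
          exact Finset.sum_congr rfl fun j _ => hrep j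
    _ = (m:ℝ) + 2*(∑ j ∈ Finset.range m, ((ω^j*u)/(1-ω^j*u)).re) := by
          rw [Finset.sum_add_distrib, Finset.sum_const, Finset.card_range, ← Finset.mul_sum]
          simp [nsmul_eq_mul]
    _ = (m:ℝ) + 2*((∑ j ∈ Finset.range m, (ω^j*u)/(1-ω^j*u)).re) := by
          rw [Complex.re_sum]
    _ = (m:ℝ) + 2*(((m:ℂ)*v/(1-v)).re) := by
          rw [hω, rootsum_id m hm u hult, ← hv]
  have htot : ∑ k : Fin (N*m), poissonK (ω^(((finProdFinEquiv.symm k).2 : Fin m) : ℕ) * s) ζ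
      = (N:ℝ) * ((m:ℝ) + 2*(((m:ℂ)*v/(1-v)).re)) := by
    rw [Equiv.sum_comp (finProdFinEquiv.symm)
      (fun p : Fin N × Fin m => poissonK (ω^((p.2 : Fin m) : ℕ) * s) ζ)]
    rw [Fintype.sum_prod_type]
    rw [Finset.sum_congr rfl (fun i _ => inner), Finset.sum_const, Finset.card_univ,
      Fintype.card_fin, nsmul_eq_mul]
  rw [htot]
  -- main identity : (c ζ^m).re = 2 N m v.re
  have h2mN : ((2*(m:ℝ)*(N:ℝ) : ℝ) : ℂ) ≠ 0 := by
    simp only [ne_eq, Complex.ofReal_eq_zero]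
    positivity
  have hvf : ((2*(m:ℝ)*(N:ℝ) : ℝ) : ℂ) * v = (starRingEnd ℂ) (c * ζ^m) := by
    rw [hv, hu, mul_pow, hs, map_mul, ← map_pow]
    have e2 : ((2*(m:ℝ)*(N:ℝ) : ℝ) : ℂ) = 2*(m:ℂ)*(N:ℂ) := by push_cast; ring
    rw [e2]
    have hm0 : (m:ℂ) ≠ 0 := Nat.cast_ne_zero.mpr hm.ne'
    have hN0' : (N:ℂ) ≠ 0 := Nat.cast_ne_zero.mpr hNn.ne'
    field_simp
  have hmain : (c * ζ^m).re = 2*(N:ℝ)*(m:ℝ)*v.re := by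
    have := congrArg Complex.re hvf
    rw [Complex.re_ofReal_mul] at this
    rw [Complex.conj_re] at this
    linarith [this]
  have hX : ((m:ℂ)*v/(1-v)).re = (m:ℝ) * ((v/(1-v)).re) := by
    rw [mul_div_assoc]
    rw [show ((m:ℂ)) = (((m:ℝ)):ℂ) by push_cast; rfl]
    rw [Complex.re_ofReal_mul]
  have herr := re_div_error v hvlt
  have h2mNt : 2*(m:ℝ)*(N:ℝ)*t = ‖c‖ := by rw [ht]; field_simp
  have hb1 : ‖v‖^2/(1-‖v‖) ≤ 2*t^2 := by
    rw [hvn]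
    rw [div_le_iff₀ (by linarith)]
    nlinarith
  push_cast
  rw [hX, hmain]
  have efin : |2*(N:ℝ)*(m:ℝ)*v.re - ((N:ℝ)*((m:ℝ) + 2*((m:ℝ)*((v/(1-v)).re))) - (N:ℝ)*(m:ℝ))|
      = 2*(N:ℝ)*(m:ℝ) * |v.re - (v/(1-v)).re| := by
    have einside : 2*(N:ℝ)*(m:ℝ)*v.re - ((N:ℝ)*((m:ℝ) + 2*((m:ℝ)*((v/(1-v)).re))) - (N:ℝ)*(m:ℝ))
        = (2*(N:ℝ)*(m:ℝ)) * (v.re - (v/(1-v)).re) := by ring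
    rw [einside, abs_mul, _root_.abs_of_nonneg (by positivity : (0:ℝ) ≤ 2*(N:ℝ)*(m:ℝ))]
  calc |2*(N:ℝ)*(m:ℝ)*v.re - ((N:ℝ)*((m:ℝ) + 2*((m:ℝ)*((v/(1-v)).re))) - (N:ℝ)*(m:ℝ))|
      = 2*(N:ℝ)*(m:ℝ) * |v.re - (v/(1-v)).re| := efin
    _ ≤ 2*(N:ℝ)*(m:ℝ) * (‖v‖^2/(1-‖v‖)) := by
        apply mul_le_mul_of_nonneg_left _ (by positivity)
        rw [abs_sub_comm]
        exact herr
    _ ≤ 2*(N:ℝ)*(m:ℝ) * (2*t^2) := by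
        apply mul_le_mul_of_nonneg_left hb1 (by positivity)
    _ = (2*(m:ℝ)*(N:ℝ)*t) * (2*t) := by ring
    _ = ‖c‖ * (2*t) := by rw [h2mNt]
    _ ≤ δ := by linarith [htδ]

lemma PoissonRep.zharmonic (n : ℤ) (hn : n ≠ 0) (c : ℂ) (δ : ℝ) (hδ : 0 < δ) :
    PoissonRep (fun ζ => (c * ζ^n).re) δ := by
  rcases lt_or_gt_of_ne hn with hneg | hpos
  · set m : ℕ := (-n).toNat with hmdef
    have hm : 0 < m := by omega
    have hnm : n = -(m:ℤ) := by omega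
    have := PoissonRep.harmonic m hm ((starRingEnd ℂ) c) δ hδ
    apply this.congr
    intro ζ hζ
    have hζ0 : ζ ≠ 0 := by intro h; rw [h] at hζ; simp at hζ
    have hconj : (starRingEnd ℂ) ζ = ζ⁻¹ := by
      apply eq_inv_of_mul_eq_one_left
      rw [mul_comm, Complex.mul_conj]
      norm_cast
      rw [Complex.normSq_eq_norm_sq, hζ]; norm_num
    have key : (starRingEnd ℂ) ((starRingEnd ℂ) c * ζ^m) = c * ζ^n := by
      rw [map_mul, Complex.conj_conj, map_pow, hconj, inv_pow, hnm, zpow_neg, zpow_natCast]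
    calc ((starRingEnd ℂ) c * ζ^m).re
        = ((starRingEnd ℂ) ((starRingEnd ℂ) c * ζ^m)).re := (Complex.conj_re _).symm
      _ = (c * ζ^n).re := by rw [key]
  · have hnn : n = ((n.toNat : ℕ) : ℤ) := by omega
    have hm : 0 < n.toNat := by omega
    have := PoissonRep.harmonic n.toNat hm c δ hδ
    apply this.congr
    intro ζ hζ
    rw [← zpow_natCast ζ n.toNat, ← hnn]

lemma fourier_eval (θ : ℝ) (n : ℤ) :
    fourier (T := 2*Real.pi) n (θ : AddCircle (2*Real.pi)) = Complex.exp (θ*I)^n := by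
  rw [fourier_coe_apply, ← Complex.exp_int_mul]
  congr 1
  have hπ : ((2*Real.pi : ℝ) : ℂ) ≠ 0 := by
    simp [Complex.ofReal_eq_zero, Real.pi_ne_zero]
  rw [div_eq_iff hπ]
  push_cast
  ring

lemma toCircle_eq (θ : ℝ) :
    ((AddCircle.toCircle (θ : AddCircle (2*Real.pi)) : Circle) : ℂ) = Complex.exp (θ*I) := by
  rw [AddCircle.toCircle_apply_mk, Circle.coe_exp]
  congr 1
  have : 2*Real.pi/(2*Real.pi) = 1 := by
    field_simp
  rw [this]
  push_cast
  ring

/-- a continuous function on the circle with zero mean is uniformly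
approximated by `∑ P(z_k, ·) − n` with all poles `z_k` in the disk. -/
theorem approx_by_poisson_minus_constant
    (h : ℂ → ℝ) (hcont : ContinuousOn h (Metric.sphere (0 : ℂ) 1))
    (hmean : ∫ θ in (0:ℝ)..(2 * Real.pi), h (Complex.exp (θ * Complex.I)) = 0)
    (ε : ℝ) (hε : 0 < ε) :
    ∃ (n : ℕ) (z : Fin n → ℂ), (∀ k, ‖z k‖ < 1) ∧
      ∀ ζ : ℂ, ‖ζ‖ = 1 → |h ζ - ∑ k, poissonK (z k) ζ + (n : ℝ)| < ε := by
  haveI : Fact (0 < 2 * Real.pi) := ⟨by positivity⟩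
  -- the function on AddCircle
  have hmemcirc : ∀ c : Circle, (c : ℂ) ∈ Metric.sphere (0:ℂ) 1 := by
    intro c
    simp [Circle.norm_coe]
  have hFc : Continuous fun x : AddCircle (2*Real.pi) =>
      ((h ((AddCircle.toCircle x : Circle) : ℂ) : ℝ) : ℂ) := by
    apply Complex.continuous_ofReal.comp
    exact hcont.comp_continuous
      (continuous_subtype_val.comp AddCircle.continuous_toCircle)
      (fun x => hmemcirc _)
  set F : C(AddCircle (2*Real.pi), ℂ) := ⟨_, hFc⟩ with hF
  -- density of Fourier span
  have hFcl : F ∈ closure ((Submodule.span ℂ (Set.range (@fourier (2*Real.pi)))) : Set _) := by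
    rw [← Submodule.topologicalClosure_coe, span_fourier_closure_eq_top]
    trivial
  set ε' : ℝ := ε/8 with hε'
  have hε'0 : 0 < ε' := by positivity
  obtain ⟨g, hgmem, hgdist⟩ := Metric.mem_closure_iff.mp hFcl ε' hε'0
  obtain ⟨cc, hcc⟩ := Finsupp.mem_span_range_iff_exists_finsupp.mp hgmem
  -- pointwise bound
  have hpt : ∀ x, ‖F x - g x‖ ≤ ε' := by
    intro x
    calc ‖F x - g x‖ = dist (F x) (g x) := by rw [dist_eq_norm]
    _ ≤ dist F g := ContinuousMap.dist_apply_le_dist x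
    _ ≤ ε' := hgdist.le
  -- evaluation of g
  have hgeval : ∀ θ : ℝ, g (θ : AddCircle (2*Real.pi))
      = ∑ n ∈ cc.support, cc n * (Complex.exp (θ*I))^n := by
    intro θ
    rw [← hcc]
    rw [show (cc.sum fun i a => a • fourier i) = ∑ n ∈ cc.support, cc n • fourier n from rfl]
    rw [ContinuousMap.sum_apply]
    apply Finset.sum_congr rfl
    intro n _
    rw [ContinuousMap.smul_apply, smul_eq_mul, fourier_eval]
  -- F is real-valued, equals h on the circle
  have hFre : ∀ θ : ℝ, (F (θ : AddCircle (2*Real.pi))).re = h (Complex.exp (θ*I)) := by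
    intro θ
    rw [hF]
    simp only [ContinuousMap.coe_mk]
    rw [toCircle_eq]
    exact Complex.ofReal_re _
  set G : ℝ → ℝ := fun θ => (g (θ : AddCircle (2*Real.pi))).re with hGdef
  have hG : ∀ θ : ℝ, |h (Complex.exp (θ*I)) - G θ| ≤ ε' := by
    intro θ
    rw [← hFre θ]
    calc |(F (θ : AddCircle (2*Real.pi))).re - G θ|
        = |(F (θ : AddCircle (2*Real.pi)) - g (θ : AddCircle (2*Real.pi))).re| := by
          rw [Complex.sub_re]
      _ ≤ ‖F (θ : AddCircle (2*Real.pi)) - g (θ : AddCircle (2*Real.pi))‖ := Complex.abs_re_le_norm _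
      _ ≤ ε' := hpt _
  -- integral of G
  have hGeq : ∀ θ:ℝ, G θ = ∑ n ∈ cc.support, (cc n * Complex.exp (((n:ℂ)*I)*θ)).re := by
    intro θ
    rw [hGdef]
    simp only
    rw [hgeval θ, Complex.re_sum]
    apply Finset.sum_congr rfl
    intro n _
    congr 2
    rw [← Complex.exp_int_mul]
    congr 1
    push_cast
    ring
  have hintterm : ∀ n ∈ cc.support,
      (∫ θ in (0:ℝ)..(2*Real.pi), (cc n * Complex.exp (((n:ℂ)*I)*θ)).re)
        = if n = 0 then 2*Real.pi*(cc 0).re else 0 := by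
    intro n _
    by_cases hn0 : n = 0
    · subst hn0
      simp only [Int.cast_zero, zero_mul, Complex.exp_zero, mul_one, if_true]
      rw [intervalIntegral.integral_const, smul_eq_mul]
      ring
    · rw [if_neg hn0]
      have hint : IntervalIntegrable (fun θ : ℝ => cc n * Complex.exp (((n:ℂ)*I)*θ))
          volume 0 (2*Real.pi) := by
        apply Continuous.intervalIntegrable
        fun_prop
      simp only [← Complex.reCLM_apply]
      rw [Complex.reCLM.intervalIntegral_comp_comm hint]
      simp only [Complex.reCLM_apply]
      rw [intervalIntegral.integral_const_mul]
      have hne : ((n:ℂ)*I) ≠ 0 := by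
        simp [Complex.I_ne_zero, Int.cast_eq_zero, hn0]
      rw [integral_exp_mul_complex hne]
      have e1 : ((n:ℂ)*I)*((2*Real.pi : ℝ):ℂ) = (n:ℂ)*(2*(Real.pi:ℂ)*I) := by push_cast; ring
      have e2 : ((n:ℂ)*I)*((0:ℝ):ℂ) = 0 := by push_cast; ring
      rw [e1, e2, Complex.exp_int_mul_two_pi_mul_I, Complex.exp_zero]
      simp
  have hintG : ∫ θ in (0:ℝ)..(2*Real.pi), G θ = 2*Real.pi*(cc 0).re := by
    rw [intervalIntegral.integral_congr (g := fun θ =>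
        ∑ n ∈ cc.support, (cc n * Complex.exp (((n:ℂ)*I)*θ)).re) (fun θ _ => hGeq θ)]
    have hcontRe : ∀ n : ℤ, Continuous (fun θ : ℝ => (cc n * Complex.exp (((n:ℂ)*I)*θ)).re) := by
      intro n; fun_prop
    rw [intervalIntegral.integral_finset_sum (fun n _ => (hcontRe n).intervalIntegrable 0 (2*Real.pi))]
    rw [Finset.sum_congr rfl hintterm, Finset.sum_ite_eq' cc.support 0
      (fun _ => 2*Real.pi*(cc 0).re)]
    by_cases h0 : (0:ℤ) ∈ cc.support
    · rw [if_pos h0]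
    · rw [if_neg h0, Finsupp.notMem_support_iff.mp h0]
      simp
  -- integrability of h ∘ exp and G
  have hexpmem : ∀ θ : ℝ, Complex.exp ((θ:ℂ)*I) ∈ Metric.sphere (0:ℂ) 1 := by
    intro θ
    simp [Complex.norm_exp_ofReal_mul_I]
  have hint_h : IntervalIntegrable (fun θ : ℝ => h (Complex.exp ((θ:ℂ)*I)))
      volume 0 (2*Real.pi) := by
    apply Continuous.intervalIntegrable
    exact hcont.comp_continuous (by fun_prop) hexpmem
  have hint_G : IntervalIntegrable G volume 0 (2*Real.pi) := by
    apply Continuous.intervalIntegrable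
    exact Complex.continuous_re.comp (g.continuous.comp continuous_quotient_mk')
  -- bound on the constant term
  have hc0 : |(cc 0).re| ≤ ε' := by
    have h1 : ‖∫ θ in (0:ℝ)..(2*Real.pi), (G θ - h (Complex.exp ((θ:ℂ)*I)))‖
        ≤ ε' * |2*Real.pi - 0| := by
      apply intervalIntegral.norm_integral_le_of_norm_le_const
      intro θ _
      rw [Real.norm_eq_abs, abs_sub_comm]
      exact hG θ
    rw [intervalIntegral.integral_sub hint_G hint_h, hintG, hmean, sub_zero] at h1
    rw [Real.norm_eq_abs, abs_mul, _root_.abs_of_nonneg (by positivity : (0:ℝ) ≤ 2*Real.pi)] at h1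
    rw [show |2*Real.pi - 0| = 2*Real.pi from by
      rw [sub_zero]; exact _root_.abs_of_nonneg (by positivity)] at h1
    have hπ : 0 < 2*Real.pi := by positivity
    nlinarith [h1, hπ]
  -- the trigonometric approximation
  set M : Finset ℤ := cc.support.erase 0 with hM
  set Tf : ℂ → ℝ := fun ζ => ∑ n ∈ M, (cc n * ζ^n).re with hTf
  have hTfa : ∀ ζ : ℂ, ‖ζ‖ = 1 → |h ζ - Tf ζ| ≤ 2*ε' := by
    intro ζ hζ
    set θ : ℝ := Complex.arg ζ with hθ
    have hζθ : Complex.exp ((θ:ℂ)*I) = ζ := by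
      have habs := Complex.norm_mul_exp_arg_mul_I ζ
      have : ‖ζ‖ = 1 := by rw [hζ]
      rw [this] at habs
      simpa using habs
    have hre : (g (θ : AddCircle (2*Real.pi))).re = (cc 0).re + Tf ζ := by
      rw [hgeval θ, Complex.re_sum, hζθ, hTf]
      simp only [hM]
      by_cases h0 : (0:ℤ) ∈ cc.support
      · rw [← Finset.add_sum_erase _ _ h0]
        congr 1
        simp
      · rw [Finset.erase_eq_of_notMem h0, Finsupp.notMem_support_iff.mp h0]
        simp
    have hh : h ζ = h (Complex.exp ((θ:ℂ)*I)) := by rw [hζθ]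
    have hsplit : h ζ - Tf ζ = (h ζ - G θ) + (cc 0).re := by
      have hGθ : G θ = (cc 0).re + Tf ζ := hre
      rw [hGθ]; ring
    calc |h ζ - Tf ζ| = |(h ζ - G θ) + (cc 0).re| := by rw [hsplit]
      _ ≤ |h ζ - G θ| + |(cc 0).re| := abs_add_le _ _
      _ ≤ ε' + ε' := add_le_add (by rw [hh]; exact hG θ) hc0
      _ = 2*ε' := by ring
  -- Poisson representation of Tf
  set δ0 : ℝ := ε/(4*(M.card+1)) with hδ0
  have hδ0pos : 0 < δ0 := by rw [hδ0]; apply div_pos hε (by positivity)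
  have hrep := PoissonRep.finsetSum M (fun n ζ => (cc n * ζ^n).re) (fun _ => δ0)
    (fun n hn => PoissonRep.zharmonic n (Finset.ne_of_mem_erase hn) (cc n) δ0 hδ0pos)
  have hrep2 : PoissonRep Tf (ε/4) := by
    apply (hrep.congr (fun ζ _ => rfl)).mono
    rw [Finset.sum_const, nsmul_eq_mul, hδ0]
    push_cast
    have e1 : (M.card:ℝ) * (ε / (4*((M.card:ℝ)+1))) = ε/4 * ((M.card:ℝ)/((M.card:ℝ)+1)) := by
      field_simp
    rw [e1]
    have h1 : ((M.card:ℝ))/((M.card:ℝ)+1) ≤ 1 := by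
      rw [div_le_one (by positivity)]; linarith
    calc ε/4 * ((M.card:ℝ)/((M.card:ℝ)+1)) ≤ ε/4 * 1 := by gcongr
      _ = ε/4 := mul_one _
  obtain ⟨n, z, hz, hb⟩ := hrep2
  refine ⟨n, z, hz, ?_⟩
  intro ζ hζ
  have e : h ζ - ∑ k, poissonK (z k) ζ + (n:ℝ)
      = (h ζ - Tf ζ) + (Tf ζ - (∑ k, poissonK (z k) ζ - (n:ℝ))) := by ring
  rw [e]
  calc |(h ζ - Tf ζ) + (Tf ζ - (∑ k, poissonK (z k) ζ - (n:ℝ)))|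
      ≤ |h ζ - Tf ζ| + |Tf ζ - (∑ k, poissonK (z k) ζ - (n:ℝ))| := abs_add_le _ _
    _ ≤ 2*ε' + ε/4 := by gcongr; exacts [hTfa ζ hζ, hb ζ hζ]
    _ < ε := by rw [hε']; linarith
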